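/- Let P_m be the powerset of an m-element domain. Then NCTD(P_m) = ⌈m/2⌉. -/

import Mathlib

open Finset

variable {X : Type*} [DecidableEq X]

/-- A sample set `S` is consistent with concept `C`. -/
def Consistent (C : Finset X) (S : Finset (X × Bool)) : Prop :=
  ∀ p ∈ S, (p.1 ∈ C ↔ p.2 = true)

/-- `T` is a teacher mapping for the class `𝒞`. -/
def IsTeacher (𝒞 : Finset (Finset X)) (T : Finset X → Finset (X × Bool)) : Prop :=
  ∀ C ∈ 𝒞, Consistent C (T C)

/-- `T` is non-clashing on `𝒞`. -/
def NonClashing (𝒞 : Finset (Finset X)) (T : Finset X → Finset (X × Bool)) : Prop :=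
  ∀ C ∈ 𝒞, ∀ C' ∈ 𝒞, C ≠ C' → ¬ (Consistent C' (T C) ∧ Consistent C (T C'))

/-- The no-clash teaching dimension. -/
noncomputable def NCTD (𝒞 : Finset (Finset X)) : ℕ :=
  sInf {d | ∃ T : Finset X → Finset (X × Bool),
    IsTeacher 𝒞 T ∧ NonClashing 𝒞 T ∧ ∀ C ∈ 𝒞, (T C).card ≤ d}

/-- `T` is a positive teacher mapping for `𝒞` (positive examples only). -/
def IsPosTeacher (𝒞 : Finset (Finset X)) (T : Finset X → Finset X) : Prop :=
  ∀ C ∈ 𝒞, T C ⊆ C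

/-- A positive teacher mapping is non-clashing on `𝒞`. -/
def PosNonClashing (𝒞 : Finset (Finset X)) (T : Finset X → Finset X) : Prop :=
  ∀ C ∈ 𝒞, ∀ C' ∈ 𝒞, C ≠ C' → ¬ (T C ⊆ C' ∧ T C' ⊆ C)

/-- The positive no-clash teaching dimension. -/
noncomputable def NCTDplus (𝒞 : Finset (Finset X)) : ℕ :=
  sInf {d | ∃ T : Finset X → Finset X,
    IsPosTeacher 𝒞 T ∧ PosNonClashing 𝒞 T ∧ ∀ C ∈ 𝒞, (T C).card ≤ d}

/-- The average no-clash teaching dimension (real-valued). -/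
noncomputable def ANCTD (𝒞 : Finset (Finset X)) : ℝ :=
  sInf {q : ℝ | ∃ T : Finset X → Finset (X × Bool),
    IsTeacher 𝒞 T ∧ NonClashing 𝒞 T ∧
      q = (∑ C ∈ 𝒞, ((T C).card : ℝ)) / 𝒞.card}

/-- The number of neighbors of `C` in `𝒞` (concepts at symmetric difference one). -/
def degIn (𝒞 : Finset (Finset X)) (C : Finset X) : ℕ :=
  (𝒞.filter (fun C' => ((C \ C') ∪ (C' \ C)).card = 1)).card

/-- The average degree of `𝒞`. -/
noncomputable def degAvg (𝒞 : Finset (Finset X)) : ℝ :=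
  (∑ C ∈ 𝒞, (degIn 𝒞 C : ℝ)) / 𝒞.card

/-! ### Auxiliary material for the proof -/

private lemma boolP2 : ∀ p q p' q' : Bool, (if p = q then p' else q') = q →
    (if p' = q' then p else q) = q' → p = p' ∧ q = q' := by decide

/-- Flip membership of `x` in `C`. -/
private def flipx {m : ℕ} (x : Fin m) (C : Finset (Fin m)) : Finset (Fin m) :=
  if x ∈ C then C.erase x else insert x C

private lemma mem_flipx_self {m : ℕ} (x : Fin m) (C : Finset (Fin m)) :
    x ∈ flipx x C ↔ x ∉ C := by
  unfold flipx; split_ifs with h <;> simp [h]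

private lemma mem_flipx_of_ne {m : ℕ} {x z : Fin m} (C : Finset (Fin m)) (h : z ≠ x) :
    z ∈ flipx x C ↔ z ∈ C := by
  unfold flipx; split_ifs with h' <;> simp [h]

private lemma flipx_ne {m : ℕ} (x : Fin m) (C : Finset (Fin m)) : flipx x C ≠ C := by
  intro h
  by_cases hx : x ∈ C
  · have : x ∉ flipx x C := by rw [mem_flipx_self]; simpa using hx
    rw [h] at this; exact this hx
  · have : x ∈ flipx x C := by rw [mem_flipx_self]; exact hx
    rw [h] at this; exact hx this

private lemma flipx_flipx {m : ℕ} (x : Fin m) (C : Finset (Fin m)) :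
    flipx x (flipx x C) = C := by
  ext z
  by_cases hz : z = x
  · subst hz
    rw [mem_flipx_self, mem_flipx_self]
    tauto
  · rw [mem_flipx_of_ne _ hz, mem_flipx_of_ne _ hz]

/-- The teaching example of `C` on the block led by `x`. -/
private def tex {m : ℕ} (C : Finset (Fin m)) (x : Fin m) : Fin m × Bool :=
  if h : (x : ℕ) + 1 < m then
    if x ∈ C ↔ (⟨(x : ℕ) + 1, h⟩ : Fin m) ∈ C then
      (x, decide ((⟨(x : ℕ) + 1, h⟩ : Fin m) ∈ C))
    else
      ((⟨(x : ℕ) + 1, h⟩ : Fin m), decide ((⟨(x : ℕ) + 1, h⟩ : Fin m) ∈ C))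
  else (x, decide (x ∈ C))

/-- The teacher mapping realizing the upper bound. -/
private def Tup {m : ℕ} (C : Finset (Fin m)) : Finset (Fin m × Bool) :=
  ((Finset.univ : Finset (Fin m)).filter (fun x : Fin m => (x : ℕ) % 2 = 0)).image (tex C)

private lemma tex_consistent {m : ℕ} (C : Finset (Fin m)) (x : Fin m) :
    ((tex C x).1 ∈ C ↔ (tex C x).2 = true) := by
  unfold tex
  split_ifs with h h2
  · simpa using h2
  · simp
  · simp

private lemma tex_block {m : ℕ} (C D : Finset (Fin m)) (x : Fin m) (hx : (x : ℕ) + 1 < m)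
    (hc : (tex C x).1 ∈ D ↔ (tex C x).2 = true) :
    (if decide (x ∈ C) = decide ((⟨(x : ℕ) + 1, hx⟩ : Fin m) ∈ C)
      then decide (x ∈ D) else decide ((⟨(x : ℕ) + 1, hx⟩ : Fin m) ∈ D))
      = decide ((⟨(x : ℕ) + 1, hx⟩ : Fin m) ∈ C) := by
  rw [tex, dif_pos hx] at hc
  by_cases h1 : x ∈ C ↔ (⟨(x : ℕ) + 1, hx⟩ : Fin m) ∈ C
  · rw [if_pos h1] at hc
    rw [if_pos (by rwa [decide_eq_decide]), decide_eq_decide]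
    simpa using hc
  · rw [if_neg h1] at hc
    rw [if_neg (by rwa [decide_eq_decide]), decide_eq_decide]
    simpa using hc

private lemma Tup_card {m : ℕ} (C : Finset (Fin m)) : (Tup C).card ≤ (m + 1) / 2 := by
  refine le_trans Finset.card_image_le ?_
  have := Finset.card_le_card_of_injOn (f := fun x : Fin m => (x : ℕ) / 2)
    (s := (Finset.univ : Finset (Fin m)).filter (fun x : Fin m => (x : ℕ) % 2 = 0))
    (t := Finset.range ((m + 1) / 2)) ?_ ?_
  · simpa using this
  · intro x hx
    simp only [Finset.mem_coe, Finset.mem_filter, Finset.mem_univ, true_and] at hx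
    have := x.isLt
    simp only [Finset.mem_coe, Finset.mem_range]
    omega
  · intro x hx y hy hxy
    simp only [Finset.coe_filter, Finset.mem_univ, true_and, Set.mem_setOf_eq] at hx hy
    dsimp only at hxy
    apply Fin.ext
    omega

private lemma Tup_isTeacher {m : ℕ} :
    IsTeacher (Finset.univ : Finset (Finset (Fin m))) Tup := by
  intro C _ p hp
  rw [Tup, Finset.mem_image] at hp
  obtain ⟨x, _, rfl⟩ := hp
  exact tex_consistent C x

private lemma Tup_nonClashing {m : ℕ} :
    NonClashing (Finset.univ : Finset (Finset (Fin m))) Tup := by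
  intro C _ C' _ hne ⟨h1, h2⟩
  -- find a point of difference
  have hdiff : ∃ y : Fin m, ¬ (y ∈ C ↔ y ∈ C') := by
    by_contra hcon
    push_neg at hcon
    exact hne (Finset.ext fun y => hcon y)
  obtain ⟨y, hy⟩ := hdiff
  have hylt : (y : ℕ) < m := y.isLt
  set a : Fin m := ⟨(y : ℕ) - (y : ℕ) % 2, by omega⟩ with ha_def
  have ha : (a : ℕ) % 2 = 0 := by simp only [ha_def]; omega
  have hamem : a ∈ (Finset.univ : Finset (Fin m)).filter (fun x : Fin m => (x : ℕ) % 2 = 0) := by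
    simp [ha]
  have e1 := h1 (tex C a) (Finset.mem_image.mpr ⟨a, hamem, rfl⟩)
  have e2 := h2 (tex C' a) (Finset.mem_image.mpr ⟨a, hamem, rfl⟩)
  by_cases h : (a : ℕ) + 1 < m
  · -- block of two elements
    set b : Fin m := ⟨(a : ℕ) + 1, h⟩ with hb_def
    have hc1 := tex_block C C' a h e1
    have hc2 := tex_block C' C a h e2
    obtain ⟨hpp, hqq⟩ := boolP2 (decide (a ∈ C)) (decide (b ∈ C))
      (decide (a ∈ C')) (decide (b ∈ C')) hc1 hc2
    rw [decide_eq_decide] at hpp hqq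
    -- y is a or b
    have hy' : y = a ∨ y = b := by
      have h1 : (y : ℕ) = (a : ℕ) ∨ (y : ℕ) = (a : ℕ) + 1 := by
        simp only [ha_def]; omega
      rcases h1 with h1 | h1
      · left; exact Fin.ext h1
      · right; exact Fin.ext h1
    rcases hy' with h' | h'
    · exact hy (by rw [h']; exact hpp)
    · exact hy (by rw [h']; exact hqq)
  · -- singleton block: here y = a
    have hya : y = a := by
      apply Fin.ext
      simp only [ha_def] at h ⊢
      omega
    rw [tex, dif_neg h] at e1
    simp only [decide_eq_true_eq] at e1
    exact hy (by rw [hya]; exact e1.symm)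

/-- `NCTD` of the powerset of an `m`-element domain is `⌈m/2⌉`. -/
theorem NCTD_powerset (m : ℕ) :
    NCTD (Finset.univ : Finset (Finset (Fin m))) = (m + 1) / 2 := by
  have hmem : (m + 1) / 2 ∈ {d | ∃ T : Finset (Fin m) → Finset (Fin m × Bool),
      IsTeacher (Finset.univ : Finset (Finset (Fin m))) T ∧
      NonClashing (Finset.univ : Finset (Finset (Fin m))) T ∧
      ∀ C ∈ (Finset.univ : Finset (Finset (Fin m))), (T C).card ≤ d} :=
    ⟨Tup, Tup_isTeacher, Tup_nonClashing, fun C _ => Tup_card C⟩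
  refine le_antisymm (Nat.sInf_le hmem) ?_
  refine le_csInf ⟨_, hmem⟩ ?_
  rintro d ⟨T, hT, hNC, hcard⟩
  -- lower bound: m ≤ 2 * d
  set SS : Finset (Fin m) → Finset (Fin m) := fun C => (T C).image Prod.fst with hSS
  have key : ∀ (C : Finset (Fin m)) (x : Fin m), x ∈ SS C ∨ x ∈ SS (flipx x C) := by
    intro C x
    by_contra hcon
    push_neg at hcon
    obtain ⟨h1, h2⟩ := hcon
    have hC := hT C (Finset.mem_univ _)
    have hC2 := hT (flipx x C) (Finset.mem_univ _)
    refine hNC C (Finset.mem_univ _) (flipx x C) (Finset.mem_univ _)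
      (Ne.symm (flipx_ne x C)) ⟨?_, ?_⟩
    · intro p hp
      have hfst : p.1 ≠ x := fun he => h1 (Finset.mem_image.mpr ⟨p, hp, he⟩)
      rw [mem_flipx_of_ne _ hfst]
      exact hC p hp
    · intro p hp
      have hfst : p.1 ≠ x := fun he => h2 (Finset.mem_image.mpr ⟨p, hp, he⟩)
      have := hC2 p hp
      rwa [mem_flipx_of_ne _ hfst] at this
  have hcard_sum : ∀ C : Finset (Fin m), (∑ x : Fin m, (if x ∈ SS C then 1 else 0)) =
      (SS C).card := by
    intro C
    rw [Finset.sum_ite_mem, Finset.univ_inter, Finset.sum_const, smul_eq_mul, mul_one]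
  have count : m * 2 ^ m ≤ 2 * ∑ C : Finset (Fin m), (SS C).card := by
    have step1 : m * 2 ^ m ≤ ∑ C : Finset (Fin m), (SS C).card +
        ∑ C : Finset (Fin m), ∑ x : Fin m, (if x ∈ SS (flipx x C) then 1 else 0) := by
      have base : m * 2 ^ m = ∑ C : Finset (Fin m), ∑ x : Fin m, 1 := by
        simp [Finset.card_univ, Fintype.card_finset, mul_comm]
      rw [base, ← Finset.sum_add_distrib]
      refine Finset.sum_le_sum fun C _ => ?_
      rw [← hcard_sum C, ← Finset.sum_add_distrib]
      refine Finset.sum_le_sum fun x _ => ?_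
      rcases key C x with h | h <;> simp [h]
    have step2 : ∑ C : Finset (Fin m), ∑ x : Fin m, (if x ∈ SS (flipx x C) then 1 else 0) =
        ∑ C : Finset (Fin m), (SS C).card := by
      rw [Finset.sum_comm]
      have inner : ∀ x : Fin m,
          (∑ C : Finset (Fin m), (if x ∈ SS (flipx x C) then 1 else 0)) =
          ∑ C : Finset (Fin m), (if x ∈ SS C then 1 else 0) := by
        intro x
        have hinv : Function.Involutive (flipx x) := fun C => flipx_flipx x C
        exact Fintype.sum_equiv hinv.toPerm _ _ (fun C => rfl)
      calc ∑ x : Fin m, ∑ C : Finset (Fin m), (if x ∈ SS (flipx x C) then 1 else 0)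
          = ∑ x : Fin m, ∑ C : Finset (Fin m), (if x ∈ SS C then 1 else 0) :=
            Finset.sum_congr rfl fun x _ => inner x
        _ = ∑ C : Finset (Fin m), ∑ x : Fin m, (if x ∈ SS C then 1 else 0) :=
            Finset.sum_comm
        _ = ∑ C : Finset (Fin m), (SS C).card :=
            Finset.sum_congr rfl fun C _ => hcard_sum C
    omega
  have sum_le : ∑ C : Finset (Fin m), (SS C).card ≤ d * 2 ^ m := by
    calc ∑ C : Finset (Fin m), (SS C).card
        ≤ ∑ C : Finset (Fin m), (T C).card :=
          Finset.sum_le_sum fun C _ => Finset.card_image_le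
      _ ≤ ∑ _C : Finset (Fin m), d :=
          Finset.sum_le_sum fun C _ => hcard C (Finset.mem_univ _)
      _ = d * 2 ^ m := by
          simp [Finset.card_univ, Fintype.card_finset, mul_comm]
  have hm2d : m * 2 ^ m ≤ 2 * d * 2 ^ m := by
    calc m * 2 ^ m ≤ 2 * ∑ C : Finset (Fin m), (SS C).card := count
      _ ≤ 2 * (d * 2 ^ m) := by omega
      _ = 2 * d * 2 ^ m := by ring
  have hpos : 0 < 2 ^ m := Nat.pow_pos (by norm_num)
  have : m ≤ 2 * d := Nat.le_of_mul_le_mul_right hm2d hpos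
  omega
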